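/- Let s ↦ ρ_s be defined by ρ(s,ω) := Σₙ ρ⁽ⁿ⁾(s,ω)·1_{[τₙ₋₁(ω), τₙ(ω))}(s) + s·1_{[τ̄(ω), ∞)}(s), where τₙ ↑ τ̄ are stopping times, each ρ⁽ⁿ⁾ is nondecreasing càdlàg adapted with s - ε ≤ ρ⁽ⁿ⁾_s ≤ s on ⟦0, τₙ⟦, ρ⁽ⁿ⁾_s = s on ⟦τₙ, ∞⟦, and ρ⁽ⁿ⁺¹⁾ = ρ⁽ⁿ⁾ on ⟦0, τₙ⟧. Then ρ is nondecreasing càdlàg adapted with s - ε ≤ ρ_s ≤ s on ⟦0, τ̄⟦ and ρ_s = s on ⟦τ̄, ∞⟦. -/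

import Mathlib

open MeasureTheory Filter
open scoped Classical

/-- Pasting of the time-delay processes in Step 2 of Proposition 4.9: the pasted process
`ρ̄ = Σₙ ρ⁽ⁿ⁾·1_{[τₙ₋₁, τₙ)} + s·1_{[τ̄, ∞)}` is nondecreasing, càdlàg, adapted, with
`s - ε ≤ ρ̄_s ≤ s` on `⟦0, τ̄⟦` and `ρ̄_s = s` on `⟦τ̄, ∞⟦`. -/
theorem pasted_delay_process {Ω : Type*} {m0 : MeasurableSpace Ω}
    (ℱ : Filtration ℝ m0) (T ε : ℝ) (hε : 0 < ε)
    (τ : ℕ → Ω → ℝ) (hst : ∀ n, IsStoppingTime ℱ (fun ω => ((τ n ω : ℝ) : WithTop ℝ)))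
    (hτ0 : ∀ ω, τ 0 ω = 0)
    (hmono : ∀ n ω, τ n ω ≤ τ (n + 1) ω) (hT : ∀ n ω, τ n ω ≤ T)
    (τbar : Ω → ℝ) (hτbar : ∀ ω, τbar ω = ⨆ n, τ n ω)
    (ρ : ℕ → ℝ → Ω → ℝ)
    (hρmono : ∀ n ω, Monotone fun s => ρ n s ω)
    (hρrc : ∀ n ω s, ContinuousWithinAt (fun u => ρ n u ω) (Set.Ici s) s)
    (hρll : ∀ n ω s, ∃ l : ℝ, Tendsto (fun u => ρ n u ω) (nhdsWithin s (Set.Iio s)) (nhds l))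
    (hρadapted : ∀ n, Adapted ℱ (ρ n))
    (hρbd : ∀ n s ω, s < τ n ω → s - ε ≤ ρ n s ω ∧ ρ n s ω ≤ s)
    (hρeq : ∀ n s ω, τ n ω ≤ s → ρ n s ω = s)
    (hconsist : ∀ n s ω, s ≤ τ n ω → ρ (n + 1) s ω = ρ n s ω)
    (ρbar : ℝ → Ω → ℝ)
    (hρbar : ∀ s ω, ρbar s ω =
      if h : ∃ n, s < τ n ω then ρ (Nat.find h) s ω else s) :
    (∀ ω, Monotone fun s => ρbar s ω) ∧
      (∀ ω s, ContinuousWithinAt (fun u => ρbar u ω) (Set.Ici s) s) ∧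
      (∀ ω s, ∃ l : ℝ, Tendsto (fun u => ρbar u ω) (nhdsWithin s (Set.Iio s)) (nhds l)) ∧
      Adapted ℱ ρbar ∧
      (∀ s ω, s < τbar ω → s - ε ≤ ρbar s ω ∧ ρbar s ω ≤ s) ∧
      (∀ s ω, τbar ω ≤ s → ρbar s ω = s) := by
  -- τ is monotone in n
  have τmono : ∀ ω, Monotone fun n => τ n ω := fun ω =>
    monotone_nat_of_le_succ fun n => hmono n ω
  -- the ρ's are consistent
  have agree : ∀ k m, k ≤ m → ∀ s ω, s ≤ τ k ω → ρ m s ω = ρ k s ω := by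
    intro k m hkm
    induction m, hkm using Nat.le_induction with
    | base => intro s ω _; rfl
    | succ m hkm ih =>
      intro s ω hs
      rw [hconsist m s ω (hs.trans (τmono ω hkm)), ih s ω hs]
  -- key formula
  have key : ∀ n s ω, s < τ n ω → ρbar s ω = ρ n s ω := by
    intro n s ω hs
    have h : ∃ m, s < τ m ω := ⟨n, hs⟩
    rw [hρbar, dif_pos h]
    exact (agree (Nat.find h) n (Nat.find_le hs) s ω (Nat.find_spec h).le).symm
  have hbdd : ∀ ω, BddAbove (Set.range fun n => τ n ω) := fun ω =>
    ⟨T, by rintro x ⟨n, rfl⟩; exact hT n ω⟩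
  have hτle : ∀ n ω, τ n ω ≤ τbar ω := fun n ω => by
    rw [hτbar]; exact le_ciSup (hbdd ω) n
  have hnoex : ∀ s ω, τbar ω ≤ s → ¬∃ n, s < τ n ω := by
    rintro s ω h ⟨n, hn⟩
    exact absurd ((hτle n ω).trans h) (not_le.mpr hn)
  have heq : ∀ s ω, τbar ω ≤ s → ρbar s ω = s := fun s ω h => by
    rw [hρbar, dif_neg (hnoex s ω h)]
  have hub : ∀ s ω, ρbar s ω ≤ s := by
    intro s ω
    rw [hρbar]
    split
    · next h => exact (hρbd _ s ω (Nat.find_spec h)).2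
    · exact le_rfl
  -- monotonicity
  have mono : ∀ ω, Monotone fun s => ρbar s ω := by
    intro ω s t hst
    show ρbar s ω ≤ ρbar t ω
    by_cases h : ∃ n, t < τ n ω
    · obtain ⟨n, ht⟩ := h
      rw [key n s ω (lt_of_le_of_lt hst ht), key n t ω ht]
      exact hρmono n ω hst
    · have : ρbar t ω = t := by rw [hρbar, dif_neg h]
      rw [this]
      exact (hub s ω).trans hst
  refine ⟨mono, ?_, ?_, ?_, ?_, heq⟩
  · -- right continuity
    intro ω s
    by_cases h : ∃ n, s < τ n ω
    · obtain ⟨n, hn⟩ := h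
      refine (hρrc n ω s).congr_of_eventuallyEq ?_ (key n s ω hn)
      have hmem : Set.Iio (τ n ω) ∈ nhdsWithin s (Set.Ici s) :=
        mem_nhdsWithin_of_mem_nhds (Iio_mem_nhds hn)
      filter_upwards [hmem] with u hu
      exact key n u ω hu
    · push_neg at h
      refine continuousWithinAt_id.congr ?_ ?_
      · intro u hu
        have : ¬∃ n, u < τ n ω := by
          rintro ⟨n, hn⟩
          exact absurd ((h n).trans hu) (not_le.mpr hn)
        rw [hρbar, dif_neg this]; rfl
      · rw [hρbar, dif_neg (by push_neg; exact h)]; rfl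
  · -- left limits
    exact fun ω s => ⟨_, (mono ω).tendsto_nhdsLT s⟩
  · -- adapted
    intro s
    have hA : ∀ n, MeasurableSet[ℱ s] {ω | s < τ n ω} := by
      intro n
      have := (hst n s).compl
      simpa [Set.compl_setOf, not_le] using this
    -- totalized predicate
    set p : ℕ → Ω → Prop := fun n ω => s < τ n ω ∨ ∀ k, ¬s < τ k ω with hp
    have hptot : ∀ ω, ∃ n, p n ω := by
      intro ω
      by_cases h : ∃ n, s < τ n ω
      · obtain ⟨n, hn⟩ := h; exact ⟨n, Or.inl hn⟩
      · push_neg at h; exact ⟨0, Or.inr fun k => not_lt.mpr (h k)⟩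
    have hpm : ∀ n, MeasurableSet[ℱ s] {ω | p n ω} := by
      intro n
      have : {ω | p n ω} = {ω | s < τ n ω} ∪ ⋂ k, {ω | s < τ k ω}ᶜ := by
        ext ω; simp [hp, Set.mem_iInter]
      rw [this]
      exact (hA n).union (MeasurableSet.iInter fun k => (hA k).compl)
    set F : ℕ → Ω → ℝ := fun n ω => if s < τ n ω then ρ n s ω else s with hF
    have hFm : ∀ n, Measurable[ℱ s] (F n) := by
      intro n
      exact Measurable.ite (hA n) (hρadapted n s) measurable_const
    have hfind : Measurable[ℱ s] fun ω => F (Nat.find (hptot ω)) ω :=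
      Measurable.find hFm hpm hptot
    have hfeq : (fun ω => ρbar s ω) = fun ω => F (Nat.find (hptot ω)) ω := by
      funext ω
      by_cases h : ∃ n, s < τ n ω
      · have hne : Nat.find (hptot ω) = Nat.find h := by
          refine le_antisymm (Nat.find_le (Or.inl (Nat.find_spec h))) ?_
          rcases Nat.find_spec (hptot ω) with h' | h'
          · exact Nat.find_le h'
          · exact absurd h (by push_neg; exact fun k => not_lt.mp (h' k))
        rw [hρbar, dif_pos h, hne, hF]
        simp only [if_pos (Nat.find_spec h)]
      · have : ¬s < τ (Nat.find (hptot ω)) ω := by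
          push_neg at h; exact not_lt.mpr (h _)
        rw [hρbar, dif_neg h, hF]
        simp only [if_neg this]
    rw [show ρbar s = fun ω => ρbar s ω from rfl, hfeq]
    exact hfind
  · -- bounds
    intro s ω hs
    have h : ∃ n, s < τ n ω := by
      rw [hτbar] at hs
      exact (lt_ciSup_iff (hbdd ω)).mp hs
    obtain ⟨n, hn⟩ := h
    rw [key n s ω hn]
    exact hρbd n s ω hn
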